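/- Let n ≥ 2 and l ∈ {0,…,n}. For all u¹, v¹ ∈ Λ¹ and all u^l, v^l ∈ Λ^l, the identity ⟨u¹∨u^l, v¹∨v^l⟩ + ⟨v¹∧u^l, u¹∧v^l⟩ = ⟨u¹, v¹⟩⟨u^l, v^l⟩ holds. -/
import Mathlib


noncomputable section

open MeasureTheory Finset

namespace EMPaper

/-- Points of `ℝⁿ`. -/
abbrev Pt (n : ℕ) := Fin n → ℝ

/-- A graded element of the complexified exterior algebra `Λ ℝⁿ ⊗ ℂ`, encoded by its
coefficients on the basis monomials `dx^{α₁} ∧ ⋯ ∧ dx^{α_l}`, indexed by the set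
`{α₁ < ⋯ < α_l} ⊆ Fin n`. -/
abbrev GF (n : ℕ) := Finset (Fin n) → ℂ

/-- A graded differential form on `ℝⁿ`. -/
abbrev Form (n : ℕ) := Pt n → GF n

variable {n : ℕ}

/-- The sign `(-1)^{#{(i,j) ∈ I × J : j < i}}` obtained when merging the increasing
enumerations of the disjoint sets `I` and `J`. -/
def msgn (I J : Finset (Fin n)) : ℂ :=
  (-1 : ℂ) ^ (((I ×ˢ J).filter fun p => p.2 < p.1).card)

/-- The wedge (exterior) product. -/
def wedge (u v : GF n) : GF n := fun S =>
  ∑ I ∈ S.powerset, msgn I (S \ I) * u I * v (S \ I)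

/-- The vee product, determined by `⟨w, v ∨ u⟩ = ⟨w ∧ v, u⟩`. -/
def vee (v u : GF n) : GF n := fun I =>
  ∑ J ∈ (univ \ I).powerset, msgn I J * v J * u (I ∪ J)

/-- The ℂ-bilinear (non-Hermitian) inner product for which the basis monomials are
orthonormal. -/
def ginner (u v : GF n) : ℂ := ∑ S : Finset (Fin n), u S * v S

/-- Componentwise complex conjugation. -/
def gconj (u : GF n) : GF n := fun S => (starRingEnd ℂ) (u S)

/-- Projection onto the degree-`l` part. -/
def proj (l : ℕ) (u : GF n) : GF n := fun S => if S.card = l then u S else 0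

/-- `u` is homogeneous of degree `l` (an element of `Λ^l`). -/
def IsGrade (l : ℕ) (u : GF n) : Prop := ∀ S : Finset (Fin n), S.card ≠ l → u S = 0

/-- The basis one-form `dx^j`. -/
def dxe (j : Fin n) : GF n := fun S => if S = {j} then 1 else 0

/-- The one-form with components `c j`. -/
def oneG (c : Fin n → ℂ) : GF n := fun S => ∑ j, if S = {j} then c j else 0

/-- `Σ_l (-1)^l u^l`. -/
def altSign (u : GF n) : GF n := fun S => (-1 : ℂ) ^ S.card * u S

/-- Exterior derivative `du = Σ_j dx^j ∧ ∂_j u`, expressed in terms of the family of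
partial derivatives `D j = ∂_j u` at a point. -/
def gd (D : Fin n → GF n) : GF n := fun S => ∑ j, wedge (dxe j) (D j) S

/-- Coderivative `δu = (-1)^l Σ_j dx^j ∨ ∂_j u` (degreewise on graded forms), expressed
in terms of the family of partial derivatives `D j = ∂_j u` at a point. -/
def gdel (D : Fin n → GF n) : GF n := fun S =>
  (-1 : ℂ) ^ (S.card + 1) * ∑ j, vee (dxe j) (D j) S

/-- Classical partial derivative `∂_{x^j}` of a complex-valued function. -/
def pd (j : Fin n) (f : Pt n → ℂ) : Pt n → ℂ := fun x => fderiv ℝ f x (Pi.single j 1)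

/-- Componentwise classical partial derivatives of a graded form. -/
def Dcl (φ : Form n) : Fin n → Form n := fun j x S => pd j (fun y => φ y S) x

/-- A test function: smooth and compactly supported. -/
def IsTest (φ : Pt n → ℂ) : Prop := ContDiff ℝ (⊤ : ℕ∞) φ ∧ HasCompactSupport φ

/-- A graded form all of whose components are test functions. -/
def TestForm (φ : Form n) : Prop := ∀ S : Finset (Fin n), IsTest fun x => φ x S

/-- `f ∈ L²_loc(ℝⁿ)`. -/
def L2loc (f : Pt n → ℂ) : Prop :=
  AEStronglyMeasurable f (volume : Measure (Pt n)) ∧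
    ∀ K : Set (Pt n), IsCompact K → IntegrableOn (fun x => ‖f x‖ ^ 2) K volume

/-- `g` is the weak `j`-th partial derivative of `f` on `ℝⁿ`. -/
def HasWeakPD (j : Fin n) (f g : Pt n → ℂ) : Prop :=
  ∀ φ : Pt n → ℂ, IsTest φ → ∫ x, g x * φ x = -∫ x, f x * pd j φ x

/-- All components of the graded form `w` belong to `H¹_loc(ℝⁿ)`, with weak partial
derivatives given componentwise by the family `Dw`. -/
def H1locWith (w : Form n) (Dw : Fin n → Form n) : Prop :=
  (∀ S : Finset (Fin n), L2loc fun x => w x S) ∧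
    (∀ (j : Fin n) (S : Finset (Fin n)),
      HasWeakPD j (fun x => w x S) fun x => Dw j x S) ∧
    ∀ (j : Fin n) (S : Finset (Fin n)), L2loc fun x => Dw j x S

section AuxStatement10
variable {n : ℕ}

lemma neg_one_sq_pow (x : ℕ) : ((-1:ℂ))^x * (-1)^x = 1 := by
  rw [← pow_add, ← two_mul, pow_mul]; norm_num

lemma neg_one_pow_eq_of_add_even {x y : ℕ} (h : Even (x + y)) : ((-1:ℂ))^x = (-1)^y := by
  have h1 : ((-1:ℂ))^(x+y) = 1 := h.neg_one_pow
  rw [pow_add] at h1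
  calc ((-1:ℂ))^x = (-1)^x * ((-1)^y * (-1)^y) := by rw [neg_one_sq_pow, mul_one]
  _ = ((-1)^x * (-1)^y) * (-1)^y := by ring
  _ = (-1)^y := by rw [h1, one_mul]

lemma msgn_singleton_right (I : Finset (Fin n)) (j : Fin n) :
    msgn I {j} = (-1:ℂ) ^ (I.filter (fun i => j < i)).card := by
  unfold msgn
  congr 1
  have h : (I ×ˢ ({j} : Finset (Fin n))).filter (fun p => p.2 < p.1)
      = (I.filter (fun i => j < i)) ×ˢ {j} := by
    ext ⟨a, b⟩
    simp only [Finset.mem_filter, Finset.mem_product, Finset.mem_singleton]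
    constructor
    · rintro ⟨⟨ha, hb⟩, hlt⟩; subst hb; exact ⟨⟨ha, hlt⟩, rfl⟩
    · rintro ⟨⟨ha, hlt⟩, hb⟩; subst hb; exact ⟨⟨ha, rfl⟩, hlt⟩
  rw [h, Finset.card_product, Finset.card_singleton, mul_one]

lemma msgn_singleton_left (k : Fin n) (T : Finset (Fin n)) :
    msgn {k} T = (-1:ℂ) ^ (T.filter (fun t => t < k)).card := by
  unfold msgn
  congr 1
  have h : (({k} : Finset (Fin n)) ×ˢ T).filter (fun p => p.2 < p.1)
      = ({k} : Finset (Fin n)) ×ˢ (T.filter (fun t => t < k)) := by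
    ext ⟨a, b⟩
    simp only [Finset.mem_filter, Finset.mem_product, Finset.mem_singleton]
    constructor
    · rintro ⟨⟨ha, hb⟩, hlt⟩; subst ha; exact ⟨rfl, hb, hlt⟩
    · rintro ⟨ha, hb, hlt⟩; subst ha; exact ⟨⟨rfl, hb⟩, hlt⟩
  rw [h, Finset.card_product, Finset.card_singleton, one_mul]

lemma filter_lt_card_add {I : Finset (Fin n)} {k : Fin n} (hk : k ∉ I) :
    (I.filter (fun i => i < k)).card + (I.filter (fun i => k < i)).card = I.card := by
  rw [show I.filter (fun i => k < i) = I.filter (fun i => ¬ i < k) from ?_,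
      Finset.card_filter_add_card_filter_not]
  apply Finset.filter_congr
  intro i hi
  have : i ≠ k := fun h => hk (h ▸ hi)
  constructor
  · intro h; exact not_lt.mpr h.le
  · intro h; rcases lt_or_gt_of_ne this with h1 | h1
    · exact absurd h1 h
    · exact h1

lemma grade1_sum' (P : Finset (Fin n)) (F : Finset (Fin n) → ℂ)
    (hF : ∀ J, J.card ≠ 1 → F J = 0) :
    ∑ J ∈ P.powerset, F J = ∑ j ∈ P, F {j} := by
  rw [← Finset.sum_filter_of_ne (p := fun J => J.card = 1)
      (fun J _ hne => by_contra fun h => hne (hF J h)),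
    ← Finset.powersetCard_eq_filter, Finset.powersetCard_one, Finset.sum_map]
  rfl

lemma union_singleton' (I : Finset (Fin n)) (j : Fin n) : I ∪ {j} = insert j I := by
  rw [Finset.union_comm, ← Finset.insert_eq]

lemma sign_key {I : Finset (Fin n)} {j k : Fin n} (hj : j ∉ I) (hk : k ∉ I) (hjk : j ≠ k) :
    msgn {k} (I ∪ {j}) * msgn {j} (I ∪ {k}) = -(msgn I {j} * msgn I {k}) := by
  rw [msgn_singleton_left, msgn_singleton_left, msgn_singleton_right, msgn_singleton_right,
    union_singleton', union_singleton', Finset.filter_insert, Finset.filter_insert]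
  set c1 := (I.filter (fun i => i < k)).card
  set c1' := (I.filter (fun i => k < i)).card
  set c2 := (I.filter (fun i => i < j)).card
  set c2' := (I.filter (fun i => j < i)).card
  have h1 : c1 + c1' = I.card := filter_lt_card_add hk
  have h2 : c2 + c2' = I.card := filter_lt_card_add hj
  have hjI : j ∉ I.filter (fun i => i < k) := fun h => hj (Finset.mem_of_mem_filter _ h)
  have hkI : k ∉ I.filter (fun i => i < j) := fun h => hk (Finset.mem_of_mem_filter _ h)
  rcases lt_or_gt_of_ne hjk with h | h
  · rw [if_pos h, if_neg (not_lt.mpr h.le), Finset.card_insert_of_notMem hjI]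
    have : ((-1:ℂ))^(c1+1) * (-1)^c2 = -((-1)^c1 * (-1)^c2) := by ring
    rw [this]
    congr 1
    rw [← pow_add, ← pow_add]
    exact neg_one_pow_eq_of_add_even ⟨I.card, by omega⟩
  · rw [if_neg (not_lt.mpr h.le), if_pos h, Finset.card_insert_of_notMem hkI]
    have : ((-1:ℂ))^c1 * (-1)^(c2+1) = -((-1)^c1 * (-1)^c2) := by ring
    rw [this]
    congr 1
    rw [← pow_add, ← pow_add]
    exact neg_one_pow_eq_of_add_even ⟨I.card, by omega⟩

lemma msgn_sq (I J : Finset (Fin n)) : msgn I J * msgn I J = 1 := by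
  unfold msgn; exact neg_one_sq_pow _


end AuxStatement10

/-- Corollary A.2.  For `u¹, v¹ ∈ Λ¹` and `u^l, v^l ∈ Λ^l`:
`⟨u¹∨u^l, v¹∨v^l⟩ + ⟨v¹∧u^l, u¹∧v^l⟩ = ⟨u¹,v¹⟩⟨u^l,v^l⟩`. -/
theorem statement10 (hn : 2 ≤ n) (l : ℕ) (hl : l ≤ n) (u1 v1 ul vl : GF n)
    (hu1 : IsGrade 1 u1) (hv1 : IsGrade 1 v1) (hul : IsGrade l ul) (hvl : IsGrade l vl) :
    ginner (vee u1 ul) (vee v1 vl) + ginner (wedge v1 ul) (wedge u1 vl)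
      = ginner u1 v1 * ginner ul vl := by
  classical
  -- collapse expansions for vee and wedge
  have hveeA : ∀ I : Finset (Fin n),
      vee u1 ul I = ∑ j ∈ univ \ I, msgn I {j} * u1 {j} * ul (I ∪ {j}) :=
    fun I => grade1_sum' _ _ (fun J hJ => by rw [hu1 J hJ]; ring)
  have hveeB : ∀ I : Finset (Fin n),
      vee v1 vl I = ∑ j ∈ univ \ I, msgn I {j} * v1 {j} * vl (I ∪ {j}) :=
    fun I => grade1_sum' _ _ (fun J hJ => by rw [hv1 J hJ]; ring)
  have hwA : ∀ S : Finset (Fin n),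
      wedge v1 ul S = ∑ j ∈ S, msgn {j} (S \ {j}) * v1 {j} * ul (S \ {j}) :=
    fun S => grade1_sum' _ _ (fun J hJ => by rw [hv1 J hJ]; ring)
  have hwB : ∀ S : Finset (Fin n),
      wedge u1 vl S = ∑ j ∈ S, msgn {j} (S \ {j}) * u1 {j} * vl (S \ {j}) :=
    fun S => grade1_sum' _ _ (fun J hJ => by rw [hu1 J hJ]; ring)
  have split : ∀ (s : Finset (Fin n)) (f : Fin n × Fin n → ℂ),
      ∑ p ∈ s ×ˢ s, f p = (∑ j ∈ s, f (j, j)) + ∑ p ∈ s.offDiag, f p := by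
    intro s f
    rw [← Finset.diag_union_offDiag, Finset.sum_union (Finset.disjoint_diag_offDiag s),
      Finset.sum_diag]
  -- the two off-diagonal sums
  set O1 : ℂ := ∑ I : Finset (Fin n), ∑ p ∈ (univ \ I).offDiag,
      (msgn I {p.1} * u1 {p.1} * ul (I ∪ {p.1})) *
        (msgn I {p.2} * v1 {p.2} * vl (I ∪ {p.2})) with hO1
  set O2 : ℂ := ∑ S : Finset (Fin n), ∑ p ∈ S.offDiag,
      (msgn {p.1} (S \ {p.1}) * v1 {p.1} * ul (S \ {p.1})) *
        (msgn {p.2} (S \ {p.2}) * u1 {p.2} * vl (S \ {p.2})) with hO2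
  -- first summand
  have e1 : ginner (vee u1 ul) (vee v1 vl)
      = (∑ T : Finset (Fin n), (∑ j ∈ T, u1 {j} * v1 {j}) * (ul T * vl T)) + O1 := by
    unfold ginner
    have := fun I : Finset (Fin n) => calc
      vee u1 ul I * vee v1 vl I
          = ∑ p ∈ (univ \ I) ×ˢ (univ \ I),
              (msgn I {p.1} * u1 {p.1} * ul (I ∪ {p.1})) *
                (msgn I {p.2} * v1 {p.2} * vl (I ∪ {p.2})) := by
            rw [hveeA I, hveeB I, Finset.sum_mul_sum, ← Finset.sum_product']
      _ = (∑ j ∈ univ \ I, (msgn I {j} * u1 {j} * ul (I ∪ {j})) *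
              (msgn I {j} * v1 {j} * vl (I ∪ {j})))
          + ∑ p ∈ (univ \ I).offDiag,
              (msgn I {p.1} * u1 {p.1} * ul (I ∪ {p.1})) *
                (msgn I {p.2} * v1 {p.2} * vl (I ∪ {p.2})) := split _ _
    rw [Finset.sum_congr rfl (fun I _ => this I), Finset.sum_add_distrib]
    congr 1
    -- diagonal part
    calc
      ∑ I : Finset (Fin n), ∑ j ∈ univ \ I,
          (msgn I {j} * u1 {j} * ul (I ∪ {j})) * (msgn I {j} * v1 {j} * vl (I ∪ {j}))
        = ∑ I : Finset (Fin n), ∑ j ∈ univ \ I,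
            (u1 {j} * v1 {j}) * (ul (insert j I) * vl (insert j I)) := by
          refine Finset.sum_congr rfl fun I _ => Finset.sum_congr rfl fun j hj => ?_
          rw [union_singleton']
          calc (msgn I {j} * u1 {j} * ul (insert j I)) *
                (msgn I {j} * v1 {j} * vl (insert j I))
              = (msgn I {j} * msgn I {j}) *
                  ((u1 {j} * v1 {j}) * (ul (insert j I) * vl (insert j I))) := by ring
            _ = (u1 {j} * v1 {j}) * (ul (insert j I) * vl (insert j I)) := by
                rw [msgn_sq, one_mul]
      _ = ∑ T : Finset (Fin n), ∑ j ∈ T, (u1 {j} * v1 {j}) * (ul T * vl T) := by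
          rw [Finset.sum_sigma', Finset.sum_sigma']
          refine Finset.sum_nbij' (fun x => ⟨insert x.2 x.1, x.2⟩)
            (fun x => ⟨x.1.erase x.2, x.2⟩) ?_ ?_ ?_ ?_ ?_
          · rintro ⟨I, j⟩ h
            simp only [Finset.mem_sigma, Finset.mem_univ, true_and] at h ⊢
            exact Finset.mem_insert_self _ _
          · rintro ⟨T, j⟩ h
            simp only [Finset.mem_sigma, Finset.mem_univ, true_and] at h ⊢
            simp [Finset.mem_sdiff]
          · rintro ⟨I, j⟩ h
            simp only [Finset.mem_sigma, Finset.mem_univ, true_and, Finset.mem_sdiff] at h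
            simp [Finset.erase_insert h]
          · rintro ⟨T, j⟩ h
            simp only [Finset.mem_sigma, Finset.mem_univ, true_and] at h
            simp [Finset.insert_erase h]
          · rintro ⟨I, j⟩ h
            rfl
      _ = ∑ T : Finset (Fin n), (∑ j ∈ T, u1 {j} * v1 {j}) * (ul T * vl T) := by
          refine Finset.sum_congr rfl fun T _ => ?_
          rw [Finset.sum_mul]
  -- second summand
  have e2 : ginner (wedge v1 ul) (wedge u1 vl)
      = (∑ T : Finset (Fin n), (∑ j ∈ univ \ T, u1 {j} * v1 {j}) * (ul T * vl T)) + O2 := by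
    unfold ginner
    have := fun S : Finset (Fin n) => calc
      wedge v1 ul S * wedge u1 vl S
          = ∑ p ∈ S ×ˢ S,
              (msgn {p.1} (S \ {p.1}) * v1 {p.1} * ul (S \ {p.1})) *
                (msgn {p.2} (S \ {p.2}) * u1 {p.2} * vl (S \ {p.2})) := by
            rw [hwA S, hwB S, Finset.sum_mul_sum, ← Finset.sum_product']
      _ = (∑ j ∈ S, (msgn {j} (S \ {j}) * v1 {j} * ul (S \ {j})) *
              (msgn {j} (S \ {j}) * u1 {j} * vl (S \ {j})))
          + ∑ p ∈ S.offDiag,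
              (msgn {p.1} (S \ {p.1}) * v1 {p.1} * ul (S \ {p.1})) *
                (msgn {p.2} (S \ {p.2}) * u1 {p.2} * vl (S \ {p.2})) := split _ _
    rw [Finset.sum_congr rfl (fun S _ => this S), Finset.sum_add_distrib]
    congr 1
    calc
      ∑ S : Finset (Fin n), ∑ j ∈ S,
          (msgn {j} (S \ {j}) * v1 {j} * ul (S \ {j})) *
            (msgn {j} (S \ {j}) * u1 {j} * vl (S \ {j}))
        = ∑ S : Finset (Fin n), ∑ j ∈ S,
            (u1 {j} * v1 {j}) * (ul (S.erase j) * vl (S.erase j)) := by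
          refine Finset.sum_congr rfl fun S _ => Finset.sum_congr rfl fun j hj => ?_
          rw [← Finset.erase_eq]
          calc (msgn {j} (S.erase j) * v1 {j} * ul (S.erase j)) *
                (msgn {j} (S.erase j) * u1 {j} * vl (S.erase j))
              = (msgn {j} (S.erase j) * msgn {j} (S.erase j)) *
                  ((u1 {j} * v1 {j}) * (ul (S.erase j) * vl (S.erase j))) := by ring
            _ = (u1 {j} * v1 {j}) * (ul (S.erase j) * vl (S.erase j)) := by
                rw [msgn_sq, one_mul]
      _ = ∑ T : Finset (Fin n), ∑ j ∈ univ \ T, (u1 {j} * v1 {j}) * (ul T * vl T) := by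
          rw [Finset.sum_sigma', Finset.sum_sigma']
          refine Finset.sum_nbij' (fun x => ⟨x.1.erase x.2, x.2⟩)
            (fun x => ⟨insert x.2 x.1, x.2⟩) ?_ ?_ ?_ ?_ ?_
          · rintro ⟨S, j⟩ h
            simp only [Finset.mem_sigma, Finset.mem_univ, true_and] at h ⊢
            simp [Finset.mem_sdiff]
          · rintro ⟨I, j⟩ h
            simp only [Finset.mem_sigma, Finset.mem_univ, true_and] at h ⊢
            exact Finset.mem_insert_self _ _
          · rintro ⟨S, j⟩ h
            simp only [Finset.mem_sigma, Finset.mem_univ, true_and] at h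
            simp [Finset.insert_erase h]
          · rintro ⟨I, j⟩ h
            simp only [Finset.mem_sigma, Finset.mem_univ, true_and, Finset.mem_sdiff] at h
            simp [Finset.erase_insert h]
          · rintro ⟨S, j⟩ h
            rfl
      _ = ∑ T : Finset (Fin n), (∑ j ∈ univ \ T, u1 {j} * v1 {j}) * (ul T * vl T) := by
          refine Finset.sum_congr rfl fun T _ => ?_
          rw [Finset.sum_mul]
  -- off-diagonal cancellation
  have hcancel : O1 = -O2 := by
    rw [hO1, hO2]
    simp only [← Finset.sum_neg_distrib]
    rw [Finset.sum_sigma', Finset.sum_sigma']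
    refine Finset.sum_nbij'
      (fun x => ⟨insert x.2.2 (insert x.2.1 x.1), (x.2.2, x.2.1)⟩)
      (fun x => ⟨(x.1.erase x.2.1).erase x.2.2, (x.2.2, x.2.1)⟩) ?_ ?_ ?_ ?_ ?_
    · rintro ⟨I, j, k⟩ h
      simp only [Finset.mem_sigma, Finset.mem_univ, true_and, Finset.mem_offDiag,
        Finset.mem_sdiff] at h ⊢
      refine ⟨Finset.mem_insert_self _ _, ?_, fun hkj => h.2.2 hkj.symm⟩
      exact Finset.mem_insert_of_mem (Finset.mem_insert_self _ _)
    · rintro ⟨S, a, b⟩ h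
      simp only [Finset.mem_sigma, Finset.mem_univ, true_and, Finset.mem_offDiag,
        Finset.mem_sdiff] at h ⊢
      obtain ⟨ha, hb, hab⟩ := h
      refine ⟨fun hb' => ?_, fun ha' => ?_, fun hba => hab hba.symm⟩
      · exact (Finset.notMem_erase b _) hb'
      · exact (Finset.ne_of_mem_erase (Finset.mem_of_mem_erase ha')) rfl
    · rintro ⟨I, j, k⟩ h
      simp only [Finset.mem_sigma, Finset.mem_univ, true_and, Finset.mem_offDiag,
        Finset.mem_sdiff] at h
      obtain ⟨hj, hk, hjk⟩ := h
      have hk' : k ∉ insert j I := by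
        simp only [Finset.mem_insert]
        rintro (rfl | hkI)
        · exact hjk rfl
        · exact hk hkI
      simp [Finset.erase_insert hk', Finset.erase_insert hj]
    · rintro ⟨S, a, b⟩ h
      simp only [Finset.mem_sigma, Finset.mem_univ, true_and, Finset.mem_offDiag] at h
      obtain ⟨ha, hb, hab⟩ := h
      have hb' : b ∈ S.erase a := Finset.mem_erase.mpr ⟨fun h => hab h.symm, hb⟩
      simp [Finset.insert_erase hb', Finset.insert_erase ha]
    · rintro ⟨I, j, k⟩ h
      simp only [Finset.mem_sigma, Finset.mem_univ, true_and, Finset.mem_offDiag,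
        Finset.mem_sdiff] at h
      obtain ⟨hj, hk, hjk⟩ := h
      have hk' : k ∉ insert j I := by
        simp only [Finset.mem_insert]
        rintro (rfl | hkI)
        · exact hjk rfl
        · exact hk hkI
      have hj' : j ∉ insert k I := by
        simp only [Finset.mem_insert]
        rintro (rfl | hjI)
        · exact hjk rfl
        · exact hj hjI
      have hS1 : (insert k (insert j I)) \ {k} = I ∪ {j} := by
        rw [← Finset.erase_eq, Finset.erase_insert hk', union_singleton']
      have hS2 : (insert k (insert j I)) \ {j} = I ∪ {k} := by
        rw [← Finset.erase_eq, Finset.insert_comm, Finset.erase_insert hj', union_singleton']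
      show (msgn I {j} * u1 {j} * ul (I ∪ {j})) * (msgn I {k} * v1 {k} * vl (I ∪ {k}))
          = -((msgn {k} ((insert k (insert j I)) \ {k}) * v1 {k} *
                ul ((insert k (insert j I)) \ {k})) *
              (msgn {j} ((insert k (insert j I)) \ {j}) * u1 {j} *
                vl ((insert k (insert j I)) \ {j})))
      rw [hS1, hS2]
      have hs := sign_key hj hk hjk
      calc (msgn I {j} * u1 {j} * ul (I ∪ {j})) * (msgn I {k} * v1 {k} * vl (I ∪ {k}))
          = (msgn I {j} * msgn I {k}) *
              (u1 {j} * v1 {k} * ul (I ∪ {j}) * vl (I ∪ {k})) := by ring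
        _ = -((msgn {k} (I ∪ {j}) * msgn {j} (I ∪ {k})) *
              (u1 {j} * v1 {k} * ul (I ∪ {j}) * vl (I ∪ {k}))) := by rw [hs]; ring
        _ = -((msgn {k} (I ∪ {j}) * v1 {k} * ul (I ∪ {j})) *
              (msgn {j} (I ∪ {k}) * u1 {j} * vl (I ∪ {k}))) := by ring
  -- inner products on the right-hand side
  have hg1 : ginner u1 v1 = ∑ j : Fin n, u1 {j} * v1 {j} := by
    unfold ginner
    rw [show (univ : Finset (Finset (Fin n))) = (univ : Finset (Fin n)).powerset from
      (Finset.powerset_univ).symm]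
    exact grade1_sum' _ _ (fun J hJ => by rw [hu1 J hJ, zero_mul])
  -- assemble
  rw [e1, e2, hg1]
  have : ginner ul vl = ∑ T : Finset (Fin n), ul T * vl T := rfl
  rw [this]
  have hfin : ∀ T : Finset (Fin n),
      (∑ j ∈ T, u1 {j} * v1 {j}) + (∑ j ∈ univ \ T, u1 {j} * v1 {j})
        = ∑ j : Fin n, u1 {j} * v1 {j} := by
    intro T
    rw [add_comm]
    exact Finset.sum_sdiff (Finset.subset_univ T)
  calc
    (∑ T : Finset (Fin n), (∑ j ∈ T, u1 {j} * v1 {j}) * (ul T * vl T)) + O1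
        + ((∑ T : Finset (Fin n), (∑ j ∈ univ \ T, u1 {j} * v1 {j}) * (ul T * vl T)) + O2)
      = (∑ T : Finset (Fin n),
          ((∑ j ∈ T, u1 {j} * v1 {j}) * (ul T * vl T)
            + (∑ j ∈ univ \ T, u1 {j} * v1 {j}) * (ul T * vl T))) := by
        rw [Finset.sum_add_distrib, hcancel]; ring
    _ = ∑ T : Finset (Fin n), (∑ j : Fin n, u1 {j} * v1 {j}) * (ul T * vl T) := by
        refine Finset.sum_congr rfl fun T _ => ?_
        rw [← add_mul, hfin T]
    _ = (∑ j : Fin n, u1 {j} * v1 {j}) * ∑ T : Finset (Fin n), ul T * vl T := by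
        rw [Finset.mul_sum]


end EMPaper
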